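/- Let (Y_j)_{j≥0} be independent random variables with Y_j ~ Beta(b_j/s, w_j/s), where (w_j), (b_j) are positive reals and s > 0. If ∏_{j=0}^n w_j/(w_j + b_j) → 0 as n → ∞, then ∏_{j=0}^n (1 - Y_j) → 0 almost surely; equivalently, the random function F(r) = 1 - ∏_{j=0}^{r}(1 - Y_j) is almost surely a proper cumulative distribution function on {0,1,2,…} (nondecreasing with limit 1). -/

import Mathlib

open Finset MeasureTheory ProbabilityTheory
open scoped ENNReal NNReal

/-- The Beta function `B(a,b) = Γ(a)Γ(b)/Γ(a+b)`. -/
noncomputable def betaFn (a b : ℝ) : ℝ :=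
  Real.Gamma a * Real.Gamma b / Real.Gamma (a + b)

/-- The Beta(a,b) probability measure on `[0,1]`, given by the density
`θ^(a-1) (1-θ)^(b-1) / B(a,b)` with respect to Lebesgue measure. -/
noncomputable def betaMeasure' (a b : ℝ) : Measure ℝ :=
  (volume.restrict (Set.Ioo (0 : ℝ) 1)).withDensity
    fun θ => ENNReal.ofReal (θ ^ (a - 1) * (1 - θ) ^ (b - 1) / betaFn a b)

lemma betaFn_pos {a b : ℝ} (ha : 0 < a) (hb : 0 < b) : 0 < betaFn a b :=
  div_pos (mul_pos (Real.Gamma_pos_of_pos ha) (Real.Gamma_pos_of_pos hb))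
    (Real.Gamma_pos_of_pos (add_pos ha hb))

lemma integral_beta_kernel {a b : ℝ} (ha : 0 < a) (hb : 0 < b) :
    ∫ x in Set.Ioo (0:ℝ) 1, x ^ (a - 1) * (1 - x) ^ (b - 1) = betaFn a b := by
  have key := Complex.Gamma_mul_Gamma_eq_betaIntegral
    (s := (a : ℂ)) (t := (b : ℂ)) (by simpa using ha) (by simpa using hb)
  have hbi : Complex.betaIntegral a b =
      ((∫ x in Set.Ioo (0:ℝ) 1, x ^ (a - 1) * (1 - x) ^ (b - 1) : ℝ) : ℂ) := by
    rw [Complex.betaIntegral, intervalIntegral.integral_of_le zero_le_one,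
      MeasureTheory.integral_Ioc_eq_integral_Ioo]
    have : ∫ (t : ℝ) in Set.Ioo 0 1, (t:ℂ) ^ ((a:ℂ) - 1) * (1 - (t:ℂ)) ^ ((b:ℂ) - 1) =
        ∫ (t : ℝ) in Set.Ioo 0 1, ((t ^ (a - 1) * (1 - t) ^ (b - 1) : ℝ) : ℂ) := by
      refine setIntegral_congr_fun measurableSet_Ioo (fun x hx => ?_)
      obtain ⟨hx0, hx1⟩ := hx
      rw [Complex.ofReal_mul, Complex.ofReal_cpow hx0.le,
        Complex.ofReal_cpow (by linarith : (0:ℝ) ≤ 1 - x)]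
      push_cast
      ring
    rw [this]
    exact (integral_ofReal (𝕜 := ℂ) (f := fun t => t ^ (a-1) * (1-t) ^ (b-1))
      (μ := volume.restrict (Set.Ioo 0 1)))
  rw [hbi, ← Complex.ofReal_add] at key
  rw [Complex.Gamma_ofReal, Complex.Gamma_ofReal, Complex.Gamma_ofReal,
    ← Complex.ofReal_mul, ← Complex.ofReal_mul, Complex.ofReal_inj] at key
  rw [betaFn, eq_div_iff (Real.Gamma_pos_of_pos (add_pos ha hb)).ne']
  linarith [key]

lemma betaMeasure_integral_one_sub {a b : ℝ} (ha : 0 < a) (hb : 0 < b) :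
    ∫ x, (1 - x) ∂(betaMeasure' a b) = b / (a + b) := by
  have hdmeas : Measurable fun x : ℝ =>
      (x ^ (a - 1) * (1 - x) ^ (b - 1) / betaFn a b).toNNReal := by
    have : Measurable fun x : ℝ => x ^ (a - 1) * (1 - x) ^ (b - 1) / betaFn a b := by
      fun_prop
    exact this.real_toNNReal
  have hB := betaFn_pos ha hb
  rw [betaMeasure']
  have : (fun θ : ℝ => ENNReal.ofReal (θ ^ (a - 1) * (1 - θ) ^ (b - 1) / betaFn a b)) =
      fun θ : ℝ => ((θ ^ (a - 1) * (1 - θ) ^ (b - 1) / betaFn a b).toNNReal : ℝ≥0∞) := rfl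
  rw [this, integral_withDensity_eq_integral_smul hdmeas (fun x => 1 - x)]
  have h2 : ∫ x in Set.Ioo (0:ℝ) 1,
      (x ^ (a - 1) * (1 - x) ^ (b - 1) / betaFn a b).toNNReal • (1 - x)
      = ∫ x in Set.Ioo (0:ℝ) 1, (betaFn a b)⁻¹ * (x ^ (a - 1) * (1 - x) ^ ((b + 1) - 1)) := by
    refine setIntegral_congr_fun measurableSet_Ioo (fun x hx => ?_)
    obtain ⟨hx0, hx1⟩ := hx
    have h1x : (0:ℝ) < 1 - x := by linarith
    have hdnn : 0 ≤ x ^ (a - 1) * (1 - x) ^ (b - 1) / betaFn a b :=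
      div_nonneg (mul_nonneg (Real.rpow_nonneg hx0.le _) (Real.rpow_nonneg h1x.le _)) hB.le
    rw [NNReal.smul_def, Real.coe_toNNReal _ hdnn, smul_eq_mul]
    rw [show (b + 1) - 1 = (b - 1) + 1 by ring, Real.rpow_add h1x, Real.rpow_one]
    field_simp
  rw [h2, integral_const_mul, integral_beta_kernel ha (by linarith : (0:ℝ) < b + 1)]
  have hGa := Real.Gamma_pos_of_pos ha
  have hGb := Real.Gamma_pos_of_pos hb
  have hGab := Real.Gamma_pos_of_pos (add_pos ha hb)
  have e1 : betaFn a (b + 1) = Real.Gamma a * (b * Real.Gamma b) / ((a + b) * Real.Gamma (a + b)) := by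
    rw [betaFn, Real.Gamma_add_one hb.ne', show a + (b + 1) = (a + b) + 1 by ring,
      Real.Gamma_add_one (add_pos ha hb).ne']
  rw [e1, betaFn]
  field_simp

lemma betaMeasure_compl_Ioo (a b : ℝ) : betaMeasure' a b (Set.Ioo (0:ℝ) 1)ᶜ = 0 := by
  rw [betaMeasure', withDensity_apply _ measurableSet_Ioo.compl,
    Measure.restrict_restrict measurableSet_Ioo.compl, Set.compl_inter_self,
    Measure.restrict_empty, lintegral_zero_measure]

theorem beta_stacy_proper_cdf (w b : ℕ → ℝ) (s : ℝ)
    (hw : ∀ j, 0 < w j) (hb : ∀ j, 0 < b j) (hs : 0 < s)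
    {Ω : Type*} {mΩ : MeasurableSpace Ω} {P : Measure Ω} [IsProbabilityMeasure P]
    (Y : ℕ → Ω → ℝ) (hYmeas : ∀ j, Measurable (Y j))
    (hYindep : iIndepFun Y P)
    (hYlaw : ∀ j, Measure.map (Y j) P = betaMeasure' (b j / s) (w j / s))
    (hrec : Filter.Tendsto (fun n => ∏ j ∈ range (n + 1), w j / (w j + b j))
      Filter.atTop (nhds 0)) :
    ∀ᵐ ω ∂P,
      Filter.Tendsto (fun n => ∏ j ∈ range (n + 1), (1 - Y j ω))
        Filter.atTop (nhds 0) ∧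
      Monotone (fun r => 1 - ∏ j ∈ range (r + 1), (1 - Y j ω)) ∧
      Filter.Tendsto (fun r => 1 - ∏ j ∈ range (r + 1), (1 - Y j ω))
        Filter.atTop (nhds 1) := by
  set f : ℕ → Ω → ℝ := fun j ω => 1 - Y j ω with hf
  have hfmeas : ∀ j, Measurable (f j) := fun j => measurable_const.sub (hYmeas j)
  -- almost surely each Y j lands in (0,1)
  have hIoo : ∀ j, ∀ᵐ ω ∂P, Y j ω ∈ Set.Ioo (0:ℝ) 1 := by
    intro j
    have h0 : P ((Y j) ⁻¹' (Set.Ioo (0:ℝ) 1)ᶜ) = 0 := by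
      rw [← Measure.map_apply (hYmeas j) measurableSet_Ioo.compl, hYlaw j,
        betaMeasure_compl_Ioo]
    rw [ae_iff]
    exact h0
  have hgood : ∀ᵐ ω ∂P, ∀ j, Y j ω ∈ Set.Ioo (0:ℝ) 1 := ae_all_iff.2 hIoo
  -- bounds on products for good ω
  have hbnd : ∀ ω, (∀ j, Y j ω ∈ Set.Ioo (0:ℝ) 1) → ∀ n,
      0 ≤ ∏ j ∈ range n, f j ω ∧ ∏ j ∈ range n, f j ω ≤ 1 := by
    intro ω hω n
    constructor
    · exact Finset.prod_nonneg fun j _ => by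
        have := (hω j).2; simp only [hf]; linarith
    · exact Finset.prod_le_one (fun j _ => by have := (hω j).2; simp only [hf]; linarith)
        (fun j _ => by have := (hω j).1; simp only [hf]; linarith)
  -- integrability
  have hPm : ∀ n, Measurable fun ω => ∏ j ∈ range n, f j ω :=
    fun n => Finset.measurable_prod _ (fun j _ => hfmeas j)
  have hPint : ∀ n, Integrable (fun ω => ∏ j ∈ range n, f j ω) P := by
    intro n
    refine (integrable_const (1:ℝ)).mono' (hPm n).aestronglyMeasurable ?_
    filter_upwards [hgood] with ω hω
    rw [Real.norm_eq_abs, abs_of_nonneg (hbnd ω hω n).1]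
    exact (hbnd ω hω n).2
  have hfint : ∀ j, Integrable (f j) P := by
    intro j
    refine (integrable_const (1:ℝ)).mono' (hfmeas j).aestronglyMeasurable ?_
    filter_upwards [hgood] with ω hω
    have h1 := (hω j).1
    have h2 := (hω j).2
    rw [Real.norm_eq_abs, abs_of_nonneg (by simp only [hf]; linarith)]
    simp only [hf]
    linarith
  -- expectation of each factor
  have hEf : ∀ j, ∫ ω, f j ω ∂P = w j / (w j + b j) := by
    intro j
    have h1 : ∫ ω, f j ω ∂P = ∫ x, (1 - x) ∂(Measure.map (Y j) P) :=
      (integral_map (hYmeas j).aemeasurable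
        ((measurable_const.sub measurable_id).aestronglyMeasurable)).symm
    rw [h1, hYlaw j, betaMeasure_integral_one_sub (div_pos (hb j) hs) (div_pos (hw j) hs)]
    rw [← add_div]
    have h1 : s ≠ 0 := hs.ne'
    have h2 : b j + w j ≠ 0 := by have := hw j; have := hb j; positivity
    have h3 : w j + b j ≠ 0 := by have := hw j; have := hb j; positivity
    field_simp
    exact congrArg _ (add_comm _ _)
  -- expectation of the product
  have hEP : ∀ n, ∫ ω, ∏ j ∈ range n, f j ω ∂P = ∏ j ∈ range n, (w j / (w j + b j)) := by
    intro n
    induction n with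
    | zero => simp
    | succ n ih =>
      have hfind : iIndepFun f P :=
        hYindep.comp (fun _ x => 1 - x) (fun _ => measurable_const.sub measurable_id)
      have hind : IndepFun (fun ω => ∏ j ∈ range n, f j ω) (f n) P := by
        have h := hfind.indepFun_prod_range_succ hfmeas n
        have he : (∏ j ∈ range n, f j) = fun ω => ∏ j ∈ range n, f j ω := by
          funext ω; exact Finset.prod_apply ω (range n) f
        rwa [he] at h
      have hmul : ∫ ω, (∏ j ∈ range n, f j ω) * f n ω ∂P
          = (∫ ω, ∏ j ∈ range n, f j ω ∂P) * ∫ ω, f n ω ∂P :=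
        hind.integral_mul_eq_mul_integral (hPint n).aestronglyMeasurable (hfint n).aestronglyMeasurable
      calc ∫ ω, ∏ j ∈ range (n + 1), f j ω ∂P
          = ∫ ω, (∏ j ∈ range n, f j ω) * f n ω ∂P := by
            refine integral_congr_ae (Filter.Eventually.of_forall fun ω => ?_)
            simp only [Finset.prod_range_succ]
        _ = (∫ ω, ∏ j ∈ range n, f j ω ∂P) * ∫ ω, f n ω ∂P := hmul
        _ = ∏ j ∈ range (n + 1), (w j / (w j + b j)) := by
            rw [ih, hEf n, Finset.prod_range_succ]
  -- the limit function
  set L : Ω → ℝ := fun ω => ⨅ n, ∏ j ∈ range (n + 1), f j ω with hL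
  have hLmeas : Measurable L := Measurable.iInf (fun n => hPm (n + 1))
  have hanti : ∀ ω, (∀ j, Y j ω ∈ Set.Ioo (0:ℝ) 1) →
      Antitone fun n => ∏ j ∈ range (n + 1), f j ω := by
    intro ω hω
    refine antitone_nat_of_succ_le fun n => ?_
    rw [Finset.prod_range_succ]
    have h0 := (hbnd ω hω (n + 1)).1
    have h1 : f (n + 1) ω ≤ 1 := by have := (hω (n + 1)).1; simp only [hf]; linarith
    exact mul_le_of_le_one_right h0 h1
  have hbdd : ∀ ω, (∀ j, Y j ω ∈ Set.Ioo (0:ℝ) 1) →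
      BddBelow (Set.range fun n => ∏ j ∈ range (n + 1), f j ω) := by
    intro ω hω
    exact ⟨0, fun x ⟨n, hn⟩ => hn ▸ (hbnd ω hω (n + 1)).1⟩
  have htendL : ∀ᵐ ω ∂P, Filter.Tendsto (fun n => ∏ j ∈ range (n + 1), f j ω)
      Filter.atTop (nhds (L ω)) := by
    filter_upwards [hgood] with ω hω
    exact tendsto_atTop_ciInf (hanti ω hω) (hbdd ω hω)
  have hLnonneg : 0 ≤ᵐ[P] L := by
    filter_upwards [hgood] with ω hω
    exact le_ciInf fun n => (hbnd ω hω (n + 1)).1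
  have hLle : ∀ n, L ≤ᵐ[P] fun ω => ∏ j ∈ range (n + 1), f j ω := by
    intro n
    filter_upwards [hgood] with ω hω
    exact ciInf_le (hbdd ω hω) n
  have hLint : Integrable L P := by
    refine (integrable_const (1:ℝ)).mono' hLmeas.aestronglyMeasurable ?_
    filter_upwards [hgood, hLnonneg, hLle 0] with ω hω h0 h1
    rw [Real.norm_eq_abs, abs_of_nonneg h0]
    exact h1.trans (hbnd ω hω 1).2
  have hEL0 : ∫ ω, L ω ∂P = 0 := by
    refine le_antisymm ?_ (integral_nonneg_of_ae hLnonneg)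
    refine ge_of_tendsto hrec (Filter.Eventually.of_forall fun n => ?_)
    calc ∫ ω, L ω ∂P ≤ ∫ ω, ∏ j ∈ range (n + 1), f j ω ∂P :=
          integral_mono_ae hLint (hPint (n + 1)) (hLle n)
      _ = ∏ j ∈ range (n + 1), (w j / (w j + b j)) := hEP (n + 1)
  have hLzero : L =ᵐ[P] 0 := (integral_eq_zero_iff_of_nonneg_ae hLnonneg hLint).1 hEL0
  filter_upwards [hgood, htendL, hLzero] with ω hω htd hz
  have htd0 : Filter.Tendsto (fun n => ∏ j ∈ range (n + 1), f j ω)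
      Filter.atTop (nhds 0) := by
    rw [← show L ω = 0 from hz]
    exact htd
  refine ⟨htd0, ?_, ?_⟩
  · intro m n hmn
    exact sub_le_sub_left (hanti ω hω hmn) 1
  · simpa using tendsto_const_nhds.sub htd0
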